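/- Let X be a real Banach space, let G be a compact topological group acting separately continuously on X by continuous linear operators via a homomorphism ρ, and let K ⊆ X be a G-invariant set. If z ∈ X \ K can be separated from K by a continuous polynomial Q (that is, sup_{w∈K}|Q(w)| < |Q(z)|), then there exists a G-invariant continuous polynomial P on X that separates z from K. Furthermore, if Q is homogeneous, then P can be chosen to be homogeneous. -/

import Mathlib

/-- A continuous polynomial on a normed space `X` over `𝕜`: a function of the form
`P x = a₀ + ∑_{k=1}^{N} A_k (x, …, x)` where each `A_k` is a continuous `k`-linear map. -/
def IsContinuousPolynomial (𝕜 : Type*) [NontriviallyNormedField 𝕜] {X : Type*}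
    [NormedAddCommGroup X] [NormedSpace 𝕜 X] (P : X → 𝕜) : Prop :=
  ∃ (N : ℕ) (a₀ : 𝕜)
    (A : (k : Fin N) → ContinuousMultilinearMap 𝕜 (fun _ : Fin (k.1 + 1) => X) 𝕜),
    ∀ x, P x = a₀ + ∑ k, A k (fun _ => x)

/-- An `m`-homogeneous continuous polynomial: `P x = A (x, …, x)` for a single continuous
`m`-linear map `A`. -/
def IsHomogeneousPolynomial (𝕜 : Type*) [NontriviallyNormedField 𝕜] {X : Type*}
    [NormedAddCommGroup X] [NormedSpace 𝕜 X] (m : ℕ) (P : X → 𝕜) : Prop :=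
  ∃ A : ContinuousMultilinearMap 𝕜 (fun _ : Fin m => X) 𝕜, ∀ x, P x = A (fun _ => x)

noncomputable section
open MeasureTheory Topology

namespace Stmt0

variable {X : Type*} [NormedAddCommGroup X] [NormedSpace ℝ X]

/-- auxiliary: sums of homogeneous pieces -/
def IsPoly' (P : X → ℝ) : Prop :=
  ∃ (N : ℕ) (H : ℕ → X → ℝ), (∀ k, IsHomogeneousPolynomial ℝ k (H k)) ∧
    ∀ x, P x = ∑ k ∈ Finset.range N, H k x

theorem hom_zero (m : ℕ) : IsHomogeneousPolynomial ℝ m (fun _ : X => (0:ℝ)) :=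
  ⟨0, by simp⟩

theorem hom_const (c : ℝ) : IsHomogeneousPolynomial ℝ 0 (fun _ : X => c) :=
  ⟨ContinuousMultilinearMap.constOfIsEmpty ℝ (fun _ : Fin 0 => X) c, by simp⟩

/-- product of continuous multilinear scalar maps -/
def mulCMM {a b : ℕ} (A : ContinuousMultilinearMap ℝ (fun _ : Fin a => X) ℝ)
    (B : ContinuousMultilinearMap ℝ (fun _ : Fin b => X) ℝ) :
    ContinuousMultilinearMap ℝ (fun _ : Fin (a + b) => X) ℝ :=
  MultilinearMap.mkContinuous
    (((TensorProduct.lid ℝ ℝ).toLinearMap.compMultilinearMap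
      (A.toMultilinearMap.domCoprod B.toMultilinearMap)).domDomCongr finSumFinEquiv)
    (‖A‖ * ‖B‖) (by
      intro v
      have h1 : (((TensorProduct.lid ℝ ℝ).toLinearMap.compMultilinearMap
          (A.toMultilinearMap.domCoprod B.toMultilinearMap)).domDomCongr finSumFinEquiv) v
          = A (fun i => v (finSumFinEquiv (Sum.inl i))) *
            B (fun i => v (finSumFinEquiv (Sum.inr i))) := by
        simp [MultilinearMap.domDomCongr, MultilinearMap.domCoprod, smul_eq_mul]
      rw [h1]
      have h2 : ∏ i, ‖v i‖ = (∏ i : Fin a, ‖v (finSumFinEquiv (Sum.inl i))‖) *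
          ∏ i : Fin b, ‖v (finSumFinEquiv (Sum.inr i))‖ := by
        rw [← Equiv.prod_comp finSumFinEquiv fun i => ‖v i‖, Fintype.prod_sum_type]
      rw [norm_mul, h2]
      have := mul_le_mul (A.le_opNorm fun i => v (finSumFinEquiv (Sum.inl i)))
        (B.le_opNorm fun i => v (finSumFinEquiv (Sum.inr i))) (norm_nonneg _)
        (by positivity)
      calc ‖A fun i => v (finSumFinEquiv (Sum.inl i))‖ *
            ‖B fun i => v (finSumFinEquiv (Sum.inr i))‖ ≤ _ := this
        _ = _ := by ring)

theorem mulCMM_apply {a b : ℕ} (A : ContinuousMultilinearMap ℝ (fun _ : Fin a => X) ℝ)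
    (B : ContinuousMultilinearMap ℝ (fun _ : Fin b => X) ℝ) (v : Fin (a+b) → X) :
    mulCMM A B v = A (fun i => v (finSumFinEquiv (Sum.inl i))) *
      B (fun i => v (finSumFinEquiv (Sum.inr i))) := by
  simp [mulCMM, MultilinearMap.domDomCongr, MultilinearMap.domCoprod, smul_eq_mul]

theorem hom_mul {a b : ℕ} {P Q : X → ℝ} (hP : IsHomogeneousPolynomial ℝ a P)
    (hQ : IsHomogeneousPolynomial ℝ b Q) :
    IsHomogeneousPolynomial ℝ (a + b) (fun x => P x * Q x) := by
  obtain ⟨A, hA⟩ := hP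
  obtain ⟨B, hB⟩ := hQ
  exact ⟨mulCMM A B, fun x => by simp only [mulCMM_apply, ← hA x, ← hB x]⟩

theorem hom_pow {m : ℕ} {Q : X → ℝ} (hQ : IsHomogeneousPolynomial ℝ m Q) (n : ℕ) :
    IsHomogeneousPolynomial ℝ (n * m) (fun x => Q x ^ n) := by
  induction n with
  | zero => simpa using hom_const (X := X) 1
  | succ n ih =>
      have := hom_mul ih hQ
      have h : n * m + m = (n+1) * m := by ring
      rw [h] at this
      simpa [pow_succ] using this

theorem poly'_congr {P R : X → ℝ} (h : ∀ x, P x = R x) (hR : IsPoly' R) : IsPoly' P := by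
  obtain ⟨N, H, hH, hs⟩ := hR
  exact ⟨N, H, hH, fun x => (h x).trans (hs x)⟩

theorem poly'_zero : IsPoly' (fun _ : X => (0:ℝ)) := ⟨0, fun _ => 0, fun k => hom_zero k, by simp⟩

theorem poly'_one : IsPoly' (fun _ : X => (1:ℝ)) := by
  refine ⟨1, fun k => if k = 0 then (fun _ => 1) else (fun _ => 0), fun k => ?_, by simp⟩
  by_cases h : k = 0
  · subst h; simpa using hom_const (X := X) 1
  · simpa [h] using hom_zero (X := X) k

theorem poly'_add {P Q : X → ℝ} (hP : IsPoly' P) (hQ : IsPoly' Q) :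
    IsPoly' (fun x => P x + Q x) := by
  obtain ⟨N₁, H, hH, hsP⟩ := hP
  obtain ⟨N₂, L, hL, hsQ⟩ := hQ
  refine ⟨max N₁ N₂, fun k => fun x =>
    (if k < N₁ then H k x else 0) + (if k < N₂ then L k x else 0), fun k => ?_, fun x => ?_⟩
  · by_cases h1 : k < N₁ <;> by_cases h2 : k < N₂
    · simp only [h1, h2, if_true]
      obtain ⟨A, hA⟩ := hH k; obtain ⟨B, hB⟩ := hL k
      exact ⟨A + B, fun x => by simp [← hA x, ← hB x]⟩
    · simp only [h1, h2, if_true, if_false, add_zero]; exact hH k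
    · simp only [h1, h2, if_true, if_false, zero_add]; exact hL k
    · simp only [h1, h2, if_false, add_zero]; exact hom_zero (X := X) k
  · show P x + Q x = _
    have e1 : ∀ (N' M : ℕ) (f : ℕ → ℝ), M ≤ N' →
        ∑ k ∈ Finset.range N', (if k < M then f k else 0) = ∑ k ∈ Finset.range M, f k := by
      intro N' M f hMN
      rw [← Finset.sum_subset (Finset.range_subset_range.2 hMN)
        (fun i _ hi => if_neg (by simpa using hi))]
      exact Finset.sum_congr rfl fun i hi => if_pos (Finset.mem_range.1 hi)
    rw [hsP, hsQ, ← e1 (max N₁ N₂) N₁ (fun k => H k x) (le_max_left _ _),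
      ← e1 (max N₁ N₂) N₂ (fun k => L k x) (le_max_right _ _), ← Finset.sum_add_distrib]

theorem sum_shift (f : ℕ → ℝ) (m N : ℕ) :
    ∑ k ∈ Finset.range (m + N), (if m ≤ k then f (k - m) else 0) =
      ∑ j ∈ Finset.range N, f j := by
  induction N with
  | zero => simp [Finset.sum_ite_of_false, fun k (hk : k ∈ Finset.range m) =>
      not_le.2 (Finset.mem_range.1 hk)]
  | succ n ih => rw [← Nat.add_assoc, Finset.sum_range_succ, Finset.sum_range_succ, ih]
                 simp

theorem poly'_hommul {m : ℕ} {F P : X → ℝ} (hF : IsHomogeneousPolynomial ℝ m F)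
    (hP : IsPoly' P) : IsPoly' (fun x => F x * P x) := by
  obtain ⟨N, H, hH, hs⟩ := hP
  refine ⟨m + N, fun k => if m ≤ k then (fun x => F x * H (k - m) x) else (fun _ => 0),
    fun k => ?_, fun x => ?_⟩
  · by_cases h : m ≤ k
    · simp only [if_pos h]
      have := hom_mul hF (hH (k - m))
      rwa [Nat.add_sub_cancel' h] at this
    · simp only [if_neg h]; exact hom_zero k
  · show F x * P x = _
    rw [hs, Finset.mul_sum, ← sum_shift (fun j => F x * H j x) m N]
    exact Finset.sum_congr rfl fun k hk => by by_cases h : m ≤ k <;> simp [h]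

theorem poly'_sum {N : ℕ} {F : ℕ → X → ℝ} (hF : ∀ k, IsPoly' (F k)) :
    IsPoly' (fun x => ∑ k ∈ Finset.range N, F k x) := by
  induction N with
  | zero => simpa using poly'_zero (X := X)
  | succ n ih =>
      exact poly'_congr (fun x => Finset.sum_range_succ (fun k => F k x) n) (poly'_add ih (hF n))

theorem poly'_mul {P Q : X → ℝ} (hP : IsPoly' P) (hQ : IsPoly' Q) :
    IsPoly' (fun x => P x * Q x) := by
  obtain ⟨N, H, hH, hs⟩ := hP
  refine poly'_congr (fun x => ?_) (poly'_sum (N := N)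
    (F := fun k x => H k x * Q x) (fun k => poly'_hommul (hH k) hQ))
  rw [hs, Finset.sum_mul]

theorem poly'_pow {Q : X → ℝ} (hQ : IsPoly' Q) (n : ℕ) :
    IsPoly' (fun x => Q x ^ n) := by
  induction n with
  | zero => simpa using poly'_one (X := X)
  | succ n ih => exact poly'_congr (fun x => by rw [pow_succ]) (poly'_mul ih hQ)

theorem poly'_of {P : X → ℝ} (hP : IsContinuousPolynomial ℝ P) : IsPoly' P := by
  obtain ⟨N, a₀, A, hs⟩ := hP
  refine ⟨N + 1, fun k x => if k = 0 then a₀ else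
      (if h : k - 1 < N then A ⟨k - 1, h⟩ (fun _ => x) else 0),
    fun k => ?_, fun x => ?_⟩
  · rcases k with _ | k
    · simpa using hom_const (X := X) a₀
    · simp only [Nat.succ_ne_zero, if_false, Nat.add_sub_cancel]
      by_cases h2 : k < N
      · simp only [dif_pos h2]; exact ⟨A ⟨k, h2⟩, fun x => rfl⟩
      · simp only [dif_neg h2]; exact hom_zero _
  · show P x = _
    rw [hs, Finset.sum_range_succ']
    simp only [Nat.succ_ne_zero, if_false, if_pos rfl, Nat.add_sub_cancel]
    rw [add_comm]
    congr 1
    calc ∑ k : Fin N, A k (fun _ => x)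
        = ∑ k : Fin N, (fun j => if h : j < N then A ⟨j, h⟩ (fun _ => x) else 0) k.1 := by
          refine Finset.sum_congr rfl fun k _ => ?_
          simp [k.isLt]
      _ = ∑ k ∈ Finset.range N, (if h : k < N then A ⟨k, h⟩ (fun _ => x) else 0) :=
          Fin.sum_univ_eq_sum_range (fun j => if h : j < N then A ⟨j, h⟩ (fun _ => x) else 0) N
      _ = _ := Finset.sum_congr rfl fun k hk => by simp [Finset.mem_range.1 hk]

theorem of_poly' {P : X → ℝ} (hP : IsPoly' P) : IsContinuousPolynomial ℝ P := by
  obtain ⟨N, H, hH, hs⟩ := hP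
  choose A hA using hH
  rcases N with _ | M
  · exact ⟨0, 0, fun k => 0, fun x => by simpa using hs x⟩
  · refine ⟨M, A 0 (fun i => i.elim0), fun k => A (k.1 + 1), fun x => ?_⟩
    have h1 : ∑ k ∈ Finset.range M, H (k+1) x = ∑ k : Fin M, A (k.1+1) (fun _ => x) := by
      rw [Fin.sum_univ_eq_sum_range (fun k => A (k+1) (fun _ => x)) M]
      exact Finset.sum_congr rfl fun k _ => hA (k+1) x
    have h2 : H 0 x = A 0 (fun i => i.elim0) :=
      (hA 0 x).trans (congrArg _ (funext fun i => i.elim0))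
    rw [hs, Finset.sum_range_succ', h1, h2, add_comm]

section Avg

variable {G : Type*} [TopologicalSpace G] [CompactSpace G] [MeasurableSpace G]
  [OpensMeasurableSpace G] (μ : Measure G) [IsFiniteMeasure μ]

theorem cont_integrable {f : G → ℝ} (hf : Continuous f) : Integrable f μ :=
  hf.integrable_of_hasCompactSupport ((isClosed_tsupport f).isCompact)

variable (σ : G → X ≃L[ℝ] X)

/-- average of a continuous multilinear map under a family of operators -/
def avgCMM (hσ : ∀ x, Continuous fun g => σ g x) {M : ℝ} (hM0 : 0 ≤ M)
    (hM : ∀ g, ‖(σ g : X →L[ℝ] X)‖ ≤ M) {n : ℕ}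
    (A : ContinuousMultilinearMap ℝ (fun _ : Fin n => X) ℝ) :
    ContinuousMultilinearMap ℝ (fun _ : Fin n => X) ℝ := by
  have cont : ∀ w : Fin n → X, Continuous fun g => A (fun i => σ g (w i)) :=
    fun w => A.cont.comp (continuous_pi fun i => hσ (w i))
  have intg : ∀ w : Fin n → X, Integrable (fun g => A (fun i => σ g (w i))) μ :=
    fun w => cont_integrable μ (cont w)
  have h : ∀ (v : Fin n → X) (j : Fin n) (t : X) (g : G),
      (fun i => σ g (Function.update v j t i))
        = Function.update (fun i => σ g (v i)) j (σ g t) := fun v j t g =>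
    funext fun i => Function.apply_update (fun _ s => σ g s) v j t i
  exact MultilinearMap.mkContinuous
    { toFun := fun v => ∫ g, A (fun i => σ g (v i)) ∂μ
      map_update_add' := by
        intro _inst v j x y
        have hd : _inst = instDecidableEqFin n := Subsingleton.elim _ _
        subst hd
        have e : ∀ g, A (fun i => σ g (Function.update v j (x + y) i))
            = A (fun i => σ g (Function.update v j x i))
              + A (fun i => σ g (Function.update v j y i)) := by
          intro g
          rw [h v j (x+y) g, h v j x g, h v j y g, map_add]
          exact A.map_update_add _ j _ _
        simp only [e]
        exact integral_add (intg _) (intg _)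
      map_update_smul' := by
        intro _inst v j c x
        have hd : _inst = instDecidableEqFin n := Subsingleton.elim _ _
        subst hd
        have e : ∀ g, A (fun i => σ g (Function.update v j (c • x) i))
            = c • A (fun i => σ g (Function.update v j x i)) := by
          intro g
          rw [h v j (c • x) g, h v j x g, _root_.map_smul]
          exact A.map_update_smul _ j _ _
        simp only [e]
        exact integral_smul c _ }
    (‖A‖ * M ^ n * (μ Set.univ).toReal)
    (by
      intro v
      have hpt : ∀ g : G, ‖A (fun i => σ g (v i))‖ ≤ ‖A‖ * M ^ n * ∏ i, ‖v i‖ := by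
        intro g
        refine (A.le_opNorm _).trans ?_
        have h1 : ∏ i, ‖σ g (v i)‖ ≤ ∏ i : Fin n, M * ‖v i‖ := by
          refine Finset.prod_le_prod (fun i _ => norm_nonneg _) fun i _ => ?_
          exact (((σ g) : X →L[ℝ] X).le_opNorm (v i)).trans
            (mul_le_mul_of_nonneg_right (hM g) (norm_nonneg _))
        have h2 : ∏ i : Fin n, M * ‖v i‖ = M ^ n * ∏ i, ‖v i‖ := by
          rw [Finset.prod_mul_distrib, Finset.prod_const, Finset.card_univ, Fintype.card_fin]
        calc ‖A‖ * ∏ i, ‖σ g (v i)‖ ≤ ‖A‖ * (M ^ n * ∏ i, ‖v i‖) := by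
              rw [← h2]; exact mul_le_mul_of_nonneg_left h1 (norm_nonneg A)
          _ = ‖A‖ * M ^ n * ∏ i, ‖v i‖ := by ring
      calc ‖∫ g, A (fun i => σ g (v i)) ∂μ‖
          ≤ (‖A‖ * M ^ n * ∏ i, ‖v i‖) * (μ Set.univ).toReal :=
            norm_integral_le_of_norm_le_const (Filter.Eventually.of_forall hpt)
        _ = ‖A‖ * M ^ n * (μ Set.univ).toReal * ∏ i, ‖v i‖ := by ring)

theorem avgCMM_apply (hσ : ∀ x, Continuous fun g => σ g x) {M : ℝ} (hM0 : 0 ≤ M)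
    (hM : ∀ g, ‖(σ g : X →L[ℝ] X)‖ ≤ M) {n : ℕ}
    (A : ContinuousMultilinearMap ℝ (fun _ : Fin n => X) ℝ) (v : Fin n → X) :
    avgCMM μ σ hσ hM0 hM A v = ∫ g, A (fun i => σ g (v i)) ∂μ := rfl

theorem hom_avg (hσ : ∀ x, Continuous fun g => σ g x) {M : ℝ} (hM0 : 0 ≤ M)
    (hM : ∀ g, ‖(σ g : X →L[ℝ] X)‖ ≤ M) {m : ℕ} {H : X → ℝ}
    (h : IsHomogeneousPolynomial ℝ m H) :
    IsHomogeneousPolynomial ℝ m (fun x => ∫ g, H (σ g x) ∂μ) := by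
  obtain ⟨A, hA⟩ := h
  refine ⟨avgCMM μ σ hσ hM0 hM A, fun x => ?_⟩
  show (∫ g, H (σ g x) ∂μ) = avgCMM μ σ hσ hM0 hM A (fun _ => x)
  rw [avgCMM_apply]
  simp only [hA]

theorem hom_comp_cont (hσ : ∀ x, Continuous fun g => σ g x) {m : ℕ} {H : X → ℝ}
    (h : IsHomogeneousPolynomial ℝ m H) (x : X) : Continuous fun g => H (σ g x) := by
  obtain ⟨A, hA⟩ := h
  simp only [hA]
  exact A.cont.comp (continuous_pi fun i => hσ x)

theorem poly'_comp_cont (hσ : ∀ x, Continuous fun g => σ g x) {P : X → ℝ}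
    (hP : IsPoly' P) (x : X) : Continuous fun g => P (σ g x) := by
  obtain ⟨N, H, hH, hs⟩ := hP
  simp only [hs]
  exact continuous_finset_sum _ fun k _ => hom_comp_cont σ hσ (hH k) x

theorem poly'_avg (hσ : ∀ x, Continuous fun g => σ g x) {M : ℝ} (hM0 : 0 ≤ M)
    (hM : ∀ g, ‖(σ g : X →L[ℝ] X)‖ ≤ M) {P : X → ℝ} (hP : IsPoly' P) :
    IsPoly' (fun x => ∫ g, P (σ g x) ∂μ) := by
  obtain ⟨N, H, hH, hs⟩ := hP
  refine ⟨N, fun k x => ∫ g, H k (σ g x) ∂μ, fun k => hom_avg μ σ hσ hM0 hM (hH k), fun x => ?_⟩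
  show (∫ g, P (σ g x) ∂μ) = _
  calc (∫ g, P (σ g x) ∂μ) = ∫ g, ∑ k ∈ Finset.range N, H k (σ g x) ∂μ := by simp only [hs]
    _ = ∑ k ∈ Finset.range N, ∫ g, H k (σ g x) ∂μ :=
        integral_finset_sum _ fun k _ => cont_integrable μ (hom_comp_cont σ hσ (hH k) x)

end Avg

end Stmt0

end

open MeasureTheory Stmt0 in
/-- Let `X` be a real Banach space, `G` a compact topological group acting
separately continuously on `X` by invertible continuous linear operators via `ρ`, and
`K ⊆ X` a `G`-invariant set. If `z ∉ K` can be separated from `K` by a continuous polynomial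
`Q`, then there is a `G`-invariant continuous polynomial `P` separating `z` from `K`;
moreover, if `Q` is homogeneous then `P` can be chosen homogeneous. -/
theorem statement0 {X : Type*} [NormedAddCommGroup X] [NormedSpace ℝ X] [CompleteSpace X]
    {G : Type*} [Group G] [TopologicalSpace G] [IsTopologicalGroup G] [CompactSpace G]
    (ρ : G →* (X ≃L[ℝ] X)) (hρ : ∀ x : X, Continuous fun g : G => (ρ g) x)
    (K : Set X) (hK : ∀ (g : G), ∀ x ∈ K, (ρ g) x ∈ K)
    (z : X) (hz : z ∉ K)
    (Q : X → ℝ) (hQ : IsContinuousPolynomial ℝ Q)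
    (hsep : ∃ c, c < ‖Q z‖ ∧ ∀ w ∈ K, ‖Q w‖ ≤ c) :
    (∃ P : X → ℝ, IsContinuousPolynomial ℝ P ∧
      (∀ (g : G) (x : X), P ((ρ g) x) = P x) ∧
      ∃ c, c < ‖P z‖ ∧ ∀ w ∈ K, ‖P w‖ ≤ c) ∧
    ∀ m : ℕ, IsHomogeneousPolynomial ℝ m Q →
      ∃ (m' : ℕ) (P : X → ℝ), IsHomogeneousPolynomial ℝ m' P ∧
        (∀ (g : G) (x : X), P ((ρ g) x) = P x) ∧
        ∃ c, c < ‖P z‖ ∧ ∀ w ∈ K, ‖P w‖ ≤ c := by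
  classical
  borelize G
  by_cases hKne : K.Nonempty
  swap
  · rw [Set.not_nonempty_iff_eq_empty] at hKne
    subst hKne
    constructor
    · exact ⟨fun _ => 1, ⟨0, 1, fun k => k.elim0, fun x => by simp⟩, fun g x => rfl,
        0, by norm_num, by simp⟩
    · intro m _
      exact ⟨0, fun _ => 1,
        ⟨ContinuousMultilinearMap.constOfIsEmpty ℝ (fun _ : Fin 0 => X) 1, fun x => by simp⟩,
        fun g x => rfl, 0, by norm_num, by simp⟩
  · obtain ⟨c, hc, hcK⟩ := hsep
    obtain ⟨w₀, hw₀⟩ := hKne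
    have hc0 : 0 ≤ c := le_trans (norm_nonneg _) (hcK w₀ hw₀)
    have hGne : Nonempty G := ⟨1⟩
    let K₀ : TopologicalSpace.PositiveCompacts G :=
      ⟨⟨Set.univ, isCompact_univ⟩, by rw [interior_univ]; exact Set.univ_nonempty⟩
    set μ := MeasureTheory.Measure.haarMeasure K₀ with hμdef
    have hμuniv : μ Set.univ = 1 := by
      exact MeasureTheory.Measure.haarMeasure_self (K₀ := K₀)
    haveI : IsProbabilityMeasure μ := ⟨hμuniv⟩
    -- uniform bound on the operators
    set T : G → X →L[ℝ] X := fun g => ((ρ g : X ≃L[ℝ] X) : X →L[ℝ] X) with hTdef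
    have hbdd : ∀ x : X, ∃ C, ∀ g : G, ‖T g x‖ ≤ C := by
      intro x
      obtain ⟨C, hC⟩ := (isCompact_range ((hρ x).norm)).bddAbove
      exact ⟨C, fun g => hC ⟨g, rfl⟩⟩
    obtain ⟨M, hM⟩ := banach_steinhaus hbdd
    have hM0 : (0:ℝ) ≤ M := le_trans (norm_nonneg _) (hM 1)
    set σ : G → X ≃L[ℝ] X := fun g => ρ g⁻¹ with hσdef
    have hσ : ∀ x : X, Continuous fun g : G => σ g x := fun x => (hρ x).comp continuous_inv
    have hMσ : ∀ g : G, ‖((σ g : X ≃L[ℝ] X) : X →L[ℝ] X)‖ ≤ M := fun g => hM g⁻¹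
    have hσK : ∀ (g : G), ∀ w ∈ K, σ g w ∈ K := fun g w hw => hK g⁻¹ w hw
    -- invariance of averages
    have hinv : ∀ (F : X → ℝ) (h : G) (x : X),
        (∫ g, F (σ g ((ρ h) x)) ∂μ) = ∫ g, F (σ g x) ∂μ := by
      intro F h x
      have e : ∀ g : G, σ g ((ρ h) x) = σ (h⁻¹ * g) x := by
        intro g
        show (ρ g⁻¹) ((ρ h) x) = (ρ (h⁻¹ * g)⁻¹) x
        rw [mul_inv_rev, inv_inv, map_mul]
        rfl
      simp only [e]
      exact MeasureTheory.integral_mul_left_eq_self (fun g => F (σ g x)) h⁻¹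
    have hQ' : IsPoly' Q := poly'_of hQ
    have hQc : ∀ x, Continuous fun g => Q (σ g x) := poly'_comp_cont σ hσ hQ'
    set δ := (c + ‖Q z‖) / 2 with hδdef
    have hδc : c < δ := by rw [hδdef]; linarith
    have hδz : δ < ‖Q z‖ := by rw [hδdef]; linarith
    have hδ0 : 0 < δ := lt_of_le_of_lt hc0 hδc
    set U : Set G := {g | δ < ‖Q (σ g z)‖} with hUdef
    have hUopen : IsOpen U := isOpen_lt continuous_const (hQc z).norm
    have h1U : (1:G) ∈ U := by
      show δ < ‖Q (σ 1 z)‖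
      have e : σ 1 z = z := by show (ρ 1⁻¹) z = z; rw [inv_one, map_one]; rfl
      rw [e]; exact hδz
    have hμU : 0 < (μ U).toReal :=
      ENNReal.toReal_pos (hUopen.measure_pos μ ⟨1, h1U⟩).ne' (measure_ne_top μ U)
    obtain ⟨n, hn⟩ : ∃ n : ℕ, c ^ (2*n) < (μ U).toReal * δ ^ (2*n) := by
      rcases eq_or_lt_of_le hc0 with hc' | hc'
      · refine ⟨1, ?_⟩
        rw [← hc', zero_pow (by norm_num : (2*1:ℕ) ≠ 0)]
        exact mul_pos hμU (pow_pos hδ0 _)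
      · obtain ⟨k, hk⟩ := pow_unbounded_of_one_lt ((1:ℝ) / (μ U).toReal) ((one_lt_div hc').2 hδc)
        refine ⟨k + 1, ?_⟩
        have hbase : (1:ℝ) ≤ δ / c := ((one_lt_div hc').2 hδc).le
        have hmono : (δ/c)^k ≤ (δ/c)^(2*(k+1)) := pow_le_pow_right₀ hbase (by omega)
        have hlt : (1:ℝ) / (μ U).toReal < (δ/c)^(2*(k+1)) := hk.trans_le hmono
        rw [div_pow, div_lt_div_iff₀ hμU (pow_pos hc' _)] at hlt
        calc c^(2*(k+1)) = 1 * c^(2*(k+1)) := (one_mul _).symm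
          _ < δ^(2*(k+1)) * (μ U).toReal := hlt
          _ = (μ U).toReal * δ^(2*(k+1)) := mul_comm _ _
    set F : X → ℝ := fun x => Q x ^ (2*n) with hFdef
    have hFc : ∀ x, Continuous fun g => F (σ g x) := fun x => (hQc x).pow _
    have hFint : ∀ x, Integrable (fun g => F (σ g x)) μ := fun x => cont_integrable μ (hFc x)
    set P : X → ℝ := fun x => ∫ g, F (σ g x) ∂μ with hPdef
    have hPinv : ∀ (g : G) (x : X), P ((ρ g) x) = P x := fun g x => hinv F g x
    have hFnonneg : ∀ y : X, 0 ≤ F y := fun y => by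
      simp only [hFdef]; rw [pow_mul]; exact pow_nonneg (sq_nonneg _) n
    have hupper : ∀ w ∈ K, ‖P w‖ ≤ c ^ (2*n) := by
      intro w hw
      have hpt : ∀ g : G, ‖F (σ g w)‖ ≤ c ^ (2*n) := by
        intro g
        simp only [hFdef]
        have h1 : ‖Q (σ g w)‖ ≤ c := hcK _ (hσK g w hw)
        calc ‖Q (σ g w) ^ (2*n)‖ = ‖Q (σ g w)‖ ^ (2*n) := norm_pow _ _
          _ ≤ c ^ (2*n) := pow_le_pow_left₀ (norm_nonneg _) h1 _
      calc ‖P w‖ ≤ c ^ (2*n) * (μ Set.univ).toReal :=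
            norm_integral_le_of_norm_le_const (Filter.Eventually.of_forall hpt)
        _ = c ^ (2*n) := by rw [hμuniv]; simp
    have hlow : (μ U).toReal * δ ^ (2*n) ≤ P z := by
      have h1 : δ ^ (2*n) * (μ U).toReal ≤ ∫ g in U, F (σ g z) ∂μ := by
        rw [mul_comm]
        refine setIntegral_ge_of_const_le hUopen.measurableSet (measure_ne_top μ U) ?_
          ((hFint z).integrableOn)
        intro g hg
        have hg' : δ ≤ ‖Q (σ g z)‖ := le_of_lt hg
        have e : ‖Q (σ g z)‖ ^ (2*n) = F (σ g z) := by
          simp only [hFdef]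
          rw [Real.norm_eq_abs, pow_abs, abs_of_nonneg (hFnonneg (σ g z))]
        calc δ ^ (2*n) ≤ ‖Q (σ g z)‖ ^ (2*n) := pow_le_pow_left₀ (le_of_lt hδ0) hg' _
          _ = F (σ g z) := e
      have h2 : (∫ g in U, F (σ g z) ∂μ) ≤ P z :=
        setIntegral_le_integral (hFint z) (Filter.Eventually.of_forall fun g => hFnonneg _)
      calc (μ U).toReal * δ^(2*n) = δ^(2*n) * (μ U).toReal := mul_comm _ _
        _ ≤ _ := le_trans h1 h2
    have hPz : c ^ (2*n) < ‖P z‖ := by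
      refine lt_of_lt_of_le hn (le_trans hlow ?_)
      rw [Real.norm_eq_abs]
      exact le_abs_self _
    constructor
    · exact ⟨P, of_poly' (poly'_avg μ σ hσ hM0 hMσ (poly'_pow hQ' (2*n))), hPinv,
        c^(2*n), hPz, hupper⟩
    · intro m hm
      exact ⟨2*n*m, P, hom_avg μ σ hσ hM0 hMσ (hom_pow hm (2*n)), hPinv,
        c^(2*n), hPz, hupper⟩
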